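/- Let κ be a regular uncountable cardinal and λ a cardinal, and let X = K_{λ,λ}. If λ ≥ r_κ, then RList(X, κ) fails: there is a list function L : V → [κ]^κ with no good choice function. (Take a κ-reaping family R of size r_κ and let the lists on both parts enumerate {X \ i : X ∈ R, i < κ}.) -/

import Mathlib

open Cardinal Set

/-- The family of subsets of κ of cardinality κ. -/
def kappaSets (κ : Cardinal.{0}) : Set (Set Ordinal) :=
  {A | A ⊆ Set.Iio κ.ord ∧ #A = Cardinal.lift.{1} κ}

/-- A κ-splits B: both B ∩ A and B \ A have cardinality κ. -/
def kSplits (κ : Cardinal.{0}) (A B : Set Ordinal) : Prop :=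
  #(B ∩ A : Set Ordinal) = Cardinal.lift.{1} κ ∧
  #(B \ A : Set Ordinal) = Cardinal.lift.{1} κ

/-- R is a κ-reaping family. -/
def IsReaping (κ : Cardinal.{0}) (R : Set (Set Ordinal)) : Prop :=
  R ⊆ kappaSets κ ∧ ∀ A ∈ kappaSets κ, ∃ B ∈ R, ¬ kSplits κ A B

/-- The κ-reaping number r_κ. -/
noncomputable def reapingNumber (κ : Cardinal.{0}) : Cardinal.{1} :=
  sInf {c | ∃ R : Set (Set Ordinal), IsReaping κ R ∧ #R = c}

variable {κ : Cardinal.{0}}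

lemma mk_Iio_ord' (κ : Cardinal.{0}) : #(Iio κ.ord : Set Ordinal) = Cardinal.lift.{1} κ := by
  rw [Ordinal.mk_Iio_ordinal, Cardinal.card_ord]

/-- unbounded subset of Iio κ.ord has card κ -/
lemma card_of_unbounded (hreg : κ.IsRegular) {S : Set Ordinal}
    (hS : S ⊆ Iio κ.ord) (hu : ∀ i < κ.ord, ∃ x ∈ S, i ≤ x) :
    #S = Cardinal.lift.{1} κ := by
  apply le_antisymm
  · rw [← mk_Iio_ord' κ]; exact mk_le_mk_of_subset hS
  · -- use cofinality
    set e := (Ordinal.ToType.mk (o := κ.ord)) with he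
    set f : S → κ.ord.ToType := fun x => e ⟨x.1, hS x.2⟩ with hf
    have hfinj : Function.Injective f := by
      intro x y hxy
      have := congrArg Subtype.val (e.injective hxy)
      exact Subtype.ext this
    have hub : Set.Unbounded (· < ·) (Set.range f) := by
      intro a
      obtain ⟨x, hx, hax⟩ := hu (e.symm a) (e.symm a).2
      refine ⟨f ⟨x, hx⟩, Set.mem_range_self _, ?_⟩
      rw [not_lt, hf]
      have : e.symm a ≤ (⟨x, hS hx⟩ : Iio κ.ord) := hax
      simpa using (e.le_iff_le.2 this)
    haveI : IsWellOrder κ.ord.ToType (· < ·) := isWellOrder_lt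
    have hcof := Order.cof_le (s := Set.range f) (fun a => by obtain ⟨b, hb, h⟩ := hub a; exact ⟨b, hb, not_lt.1 h⟩)
    rw [Ordinal.cof_toType, hreg.cof_eq] at hcof
    calc Cardinal.lift.{1} κ ≤ Cardinal.lift.{1} #(Set.range f) := by
          exact_mod_cast Cardinal.lift_le.2 hcof
      _ = #S := by
          have := Cardinal.mk_range_eq_lift.{1,0,0} hfinj
          simpa using this

/-- a bounded subset has card < κ -/
lemma bounded_of_not_card (hreg : κ.IsRegular) {S : Set Ordinal}
    (hS : S ⊆ Iio κ.ord) (hc : #S ≠ Cardinal.lift.{1} κ) :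
    ∃ i < κ.ord, ∀ x ∈ S, x < i := by
  by_contra h
  push_neg at h
  exact hc (card_of_unbounded hreg hS (fun i hi => by
    obtain ⟨x, hx, hix⟩ := h i hi
    exact ⟨x, hx, hix⟩))

lemma unbounded_of_card (hreg : κ.IsRegular) {S : Set Ordinal}
    (hS : S ⊆ Iio κ.ord) (hc : #S = Cardinal.lift.{1} κ) :
    ∀ i < κ.ord, ∃ x ∈ S, i ≤ x := by
  intro i hi
  by_contra h
  push_neg at h
  have hsub : S ⊆ Iio i := fun x hx => h x hx
  have : #S ≤ Cardinal.lift.{1} i.card := by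
    calc #S ≤ #(Iio i : Set Ordinal) := mk_le_mk_of_subset hsub
      _ = Cardinal.lift.{1} i.card := Ordinal.mk_Iio_ordinal i
  rw [hc] at this
  have : κ ≤ i.card := by exact_mod_cast Cardinal.lift_le.1 this
  exact absurd (Cardinal.lt_ord.1 hi) (not_lt.2 this)

/-- Iio κ.ord is in kappaSets -/
lemma Iio_mem_kappaSets (κ : Cardinal.{0}) : Iio κ.ord ∈ kappaSets κ :=
  ⟨subset_rfl, mk_Iio_ord' κ⟩

/-- tails of members of kappaSets are in kappaSets -/
lemma tail_mem_kappaSets (hreg : κ.IsRegular) {X : Set Ordinal}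
    (hX : X ∈ kappaSets κ) {i : Ordinal} (hi : i < κ.ord) :
    X \ Iio i ∈ kappaSets κ := by
  obtain ⟨hX1, hX2⟩ := hX
  have hu := unbounded_of_card hreg hX1 hX2
  refine ⟨fun x hx => hX1 hx.1, card_of_unbounded hreg (fun x hx => hX1 hx.1) ?_⟩
  intro j hj
  obtain ⟨x, hx, hjx⟩ := hu (max i j) (max_lt hi hj)
  exact ⟨x, ⟨hx, not_lt.2 ((le_max_left i j).trans hjx)⟩, (le_max_right i j).trans hjx⟩

lemma exists_splitter {ι : Type} [Nonempty ι] (hreg : κ.IsRegular) (hunc : ℵ₀ < κ)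
    (hι : #ι < κ) (Bf : ι → Set Ordinal) (hBf : ∀ a, Bf a ∈ kappaSets κ) :
    ∃ S ∈ kappaSets κ, ∀ a, kSplits κ S (Bf a) := by
  have hk_lim : Order.IsSuccLimit κ.ord := Cardinal.isSuccLimit_ord hreg.aleph0_le
  have hBu : ∀ a, ∀ i < κ.ord, ∃ x ∈ Bf a, i ≤ x :=
    fun a => unbounded_of_card hreg (hBf a).1 (hBf a).2
  have hne : ∀ a, ∀ β < κ.ord, (Bf a ∩ Ioi β).Nonempty := by
    intro a β hβ
    obtain ⟨x, hx, hle⟩ := hBu a (Order.succ β) (hk_lim.succ_lt hβ)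
    exact ⟨x, hx, lt_of_lt_of_le (Order.lt_succ β) hle⟩
  set nxt : ι → Ordinal → Ordinal := fun a β => sInf (Bf a ∩ Ioi β) with hnxt
  have hnxt_mem : ∀ a β, β < κ.ord → nxt a β ∈ Bf a ∩ Ioi β :=
    fun a β hβ => csInf_mem (hne a β hβ)
  have hnxt_lt : ∀ a β, β < κ.ord → nxt a β < κ.ord :=
    fun a β hβ => (hBf a).1 (hnxt_mem a β hβ).1
  have hnxt_mono : ∀ a β β', β ≤ β' → β' < κ.ord → nxt a β ≤ nxt a β' := by
    intro a β β' hββ hβ'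
    exact csInf_le_csInf (OrderBot.bddBelow _) (hne a β' hβ')
      (fun x hx => ⟨hx.1, lt_of_le_of_lt hββ hx.2⟩)
  set h : Ordinal → Ordinal := fun β => ⨆ a, nxt a β with hh
  have hbdd : ∀ β, β < κ.ord → BddAbove (Set.range fun a => nxt a β) := by
    intro β hβ
    exact ⟨κ.ord, by rintro x ⟨a, rfl⟩; exact le_of_lt (hnxt_lt a β hβ)⟩
  have hh_lt : ∀ β, β < κ.ord → h β < κ.ord :=
    fun β hβ => Cardinal.iSup_lt_ord_of_isRegular hreg hι (fun a => hnxt_lt a β hβ)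
  have hh_gt : ∀ β, β < κ.ord → β < h β := by
    intro β hβ
    obtain a₀ := Classical.arbitrary ι
    exact lt_of_lt_of_le (hnxt_mem a₀ β hβ).2 (le_ciSup (hbdd β hβ) a₀)
  have hh_mono : ∀ β β', β ≤ β' → β' < κ.ord → h β ≤ h β' :=
    fun β β' hββ hβ' => ciSup_mono (hbdd β' hβ') (fun a => hnxt_mono a β β' hββ hβ')
  set C : Set Ordinal := {c | c < κ.ord ∧ ∀ γ < c, h γ < c} with hC
  have hCunb : ∀ i < κ.ord, ∃ c ∈ C, i < c := by
    intro i hi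
    set g : ℕ → Ordinal := fun n => Nat.rec (Order.succ i) (fun _ x => Order.succ (max (h x) x)) n
      with hg
    have hg_lt : ∀ n, g n < κ.ord := by
      intro n
      induction n with
      | zero => exact hk_lim.succ_lt hi
      | succ n ih => exact hk_lim.succ_lt (max_lt (hh_lt _ ih) ih)
    have hgbdd : BddAbove (Set.range g) :=
      ⟨κ.ord, by rintro x ⟨n, rfl⟩; exact le_of_lt (hg_lt n)⟩
    have hc_lt : (⨆ n, g n) < κ.ord := by
      apply Cardinal.iSup_lt_ord_of_isRegular hreg _ hg_lt
      rw [Cardinal.mk_eq_aleph0 ℕ]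
      exact hunc
    refine ⟨⨆ n, g n, ⟨hc_lt, ?_⟩, lt_of_lt_of_le (Order.lt_succ i) (le_ciSup hgbdd 0)⟩
    intro γ hγ
    have : ∃ n, γ < g n := by
      by_contra hcon
      push_neg at hcon
      exact absurd (ciSup_le hcon) (not_le.2 hγ)
    obtain ⟨n, hn⟩ := this
    calc h γ ≤ h (g n) := hh_mono γ (g n) (le_of_lt hn) (hg_lt n)
      _ < g (n + 1) := lt_of_le_of_lt (le_max_left _ _) (Order.lt_succ _)
      _ ≤ ⨆ n, g n := le_ciSup hgbdd (n + 1)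
  set S : Set Ordinal := ⋃ c ∈ C, Ioc c (h c) with hS
  have hSsub : S ⊆ Iio κ.ord := by
    intro x hx
    simp only [hS, mem_iUnion] at hx
    obtain ⟨c, hc, hx⟩ := hx
    exact lt_of_le_of_lt hx.2 (hh_lt c hc.1)
  have key_in : ∀ a, ∀ i < κ.ord, ∃ x, x ∈ Bf a ∧ x ∈ S ∧ i ≤ x := by
    intro a i hi
    obtain ⟨c, hc, hic⟩ := hCunb i hi
    refine ⟨nxt a c, (hnxt_mem a c hc.1).1, ?_, ?_⟩
    · simp only [hS, mem_iUnion]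
      exact ⟨c, hc, (hnxt_mem a c hc.1).2, le_ciSup (hbdd c hc.1) a⟩
    · exact le_of_lt (lt_trans hic (hnxt_mem a c hc.1).2)
  have key_out : ∀ a, ∀ i < κ.ord, ∃ x, x ∈ Bf a ∧ x ∉ S ∧ i ≤ x := by
    intro a i hi
    obtain ⟨c, hc, hic⟩ := hCunb i hi
    have hCc_ne : {c' | c' ∈ C ∧ c < c'}.Nonempty := by
      obtain ⟨c', hc', hcc'⟩ := hCunb c hc.1
      exact ⟨c', hc', hcc'⟩
    set cs := sInf {c' | c' ∈ C ∧ c < c'} with hcs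
    have hcs_mem : cs ∈ C ∧ c < cs := csInf_mem hCc_ne
    have hcs_min : ∀ c' ∈ C, c < c' → cs ≤ c' := fun c' h1 h2 => csInf_le (OrderBot.bddBelow _) ⟨h1, h2⟩
    have hhc_lt : h c < κ.ord := hh_lt c hc.1
    set b := nxt a (h c) with hb
    have hb_mem := hnxt_mem a (h c) hhc_lt
    have hb_le : b ≤ h (h c) := le_ciSup (hbdd _ hhc_lt) a
    have hhc_cs : h c < cs := hcs_mem.1.2 c hcs_mem.2
    have hb_cs : b < cs := lt_of_le_of_lt hb_le (hcs_mem.1.2 (h c) hhc_cs)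
    refine ⟨b, hb_mem.1, ?_, ?_⟩
    · intro hbS
      simp only [hS, mem_iUnion] at hbS
      obtain ⟨c', hc', hb1, hb2⟩ := hbS
      rcases le_or_gt c' c with hle | hlt
      · exact absurd hb2 (not_le.2 (lt_of_le_of_lt (hh_mono c' c hle hc.1) hb_mem.2))
      · exact absurd hb1 (not_lt.2 (le_of_lt (lt_of_lt_of_le hb_cs (hcs_min c' hc' hlt))))
    · exact le_of_lt (lt_trans (lt_trans hic (hh_gt c hc.1)) hb_mem.2)
  obtain a₀ := Classical.arbitrary ι
  have hScard : S ∈ kappaSets κ := by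
    refine ⟨hSsub, card_of_unbounded hreg hSsub ?_⟩
    intro i hi
    obtain ⟨x, _, hxS, hix⟩ := key_in a₀ i hi
    exact ⟨x, hxS, hix⟩
  refine ⟨S, hScard, fun a => ?_⟩
  constructor
  · apply card_of_unbounded hreg (fun x hx => (hBf a).1 hx.1)
    intro i hi
    obtain ⟨x, hxB, hxS, hix⟩ := key_in a i hi
    exact ⟨x, ⟨hxB, hxS⟩, hix⟩
  · apply card_of_unbounded hreg (fun x hx => (hBf a).1 hx.1)
    intro i hi
    obtain ⟨x, hxB, hxS, hix⟩ := key_out a i hi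
    exact ⟨x, ⟨hxB, hxS⟩, hix⟩


/-- if λ ≥ r_κ, then RList(K_{λ,λ}, κ) fails. -/
theorem rlist_fails_of_ge_reaping {A B : Type} (κ lam : Cardinal.{0})
    (hreg : κ.IsRegular) (hunc : ℵ₀ < κ)
    (hA : #A = lam) (hB : #B = lam)
    (hge : reapingNumber κ ≤ Cardinal.lift.{1} lam) :
    ∃ L : A ⊕ B → Set Ordinal, (∀ v, L v ∈ kappaSets κ) ∧
      ¬ ∃ c : A ⊕ B → Ordinal, (∀ v, c v ∈ L v) ∧
        ∀ v w, (completeBipartiteGraph A B).Adj v w → c v ≠ c w := by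
  classical
  -- get a reaping family of minimal size
  have hne : {c | ∃ R : Set (Set Ordinal), IsReaping κ R ∧ #R = c}.Nonempty := by
    refine ⟨#(kappaSets κ), kappaSets κ, ⟨subset_rfl, fun X hX => ⟨X, hX, fun hsp => ?_⟩⟩, rfl⟩
    have h2 := hsp.2
    rw [diff_self] at h2
    simp only [mk_emptyCollection] at h2
    exact hreg.pos.ne' (Cardinal.lift_eq_zero.1 h2.symm)
  obtain ⟨R, hR, hRcard⟩ := csInf_mem hne
  have hRle : #R ≤ Cardinal.lift.{1} lam := hRcard ▸ hge
  obtain ⟨X₀, hX₀, -⟩ := hR.2 (Iio κ.ord) (Iio_mem_kappaSets κ)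
  have hRne : Nonempty ↥R := ⟨⟨X₀, hX₀⟩⟩
  have hlam0 : lam ≠ 0 := by
    rintro rfl
    simp only [Cardinal.lift_zero, le_zero_iff, Cardinal.mk_eq_zero_iff] at hRle
    exact hRle.false hRne.some
  have hAne : Nonempty A := Cardinal.mk_ne_zero_iff.1 (hA ▸ hlam0)
  have hBne : Nonempty B := Cardinal.mk_ne_zero_iff.1 (hB ▸ hlam0)
  rcases lt_or_ge lam κ with hlt | hkl
  · -- impossible case: reaping family of size < κ exists
    exfalso
    have h1 : Nonempty (↥R ↪ A) := by
      apply Cardinal.lift_mk_le'.1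
      rw [hA]
      simpa using hRle
    obtain ⟨emb⟩ := h1
    set Bf : A → Set Ordinal := fun a =>
      if h : ∃ r : ↥R, emb r = a then (h.choose : Set Ordinal) else Iio κ.ord with hBfdef
    have hBf : ∀ a, Bf a ∈ kappaSets κ := by
      intro a
      simp only [hBfdef]
      split
      · next h => exact hR.1 h.choose.2
      · exact Iio_mem_kappaSets κ
    have hBfsurj : ∀ X ∈ R, ∃ a, Bf a = X := by
      intro X hX
      refine ⟨emb ⟨X, hX⟩, ?_⟩
      simp only [hBfdef]
      have h : ∃ r : ↥R, emb r = emb ⟨X, hX⟩ := ⟨⟨X, hX⟩, rfl⟩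
      rw [dif_pos h]
      have := emb.injective h.choose_spec
      rw [this]
    obtain ⟨S, hS, hsplit⟩ := exists_splitter hreg hunc (hA ▸ hlt) Bf hBf
    obtain ⟨X, hXR, hnsp⟩ := hR.2 S hS
    obtain ⟨a, ha⟩ := hBfsurj X hXR
    exact hnsp (ha ▸ hsplit a)
  · -- main case
    have hkll : Cardinal.lift.{1} κ ≤ Cardinal.lift.{1} lam := Cardinal.lift_le.2 hkl
    have hlaminf : ℵ₀ ≤ lam := hunc.le.trans hkl
    set P := ↥R × ↥(Iio κ.ord : Set Ordinal) with hP
    have hPcard : #P ≤ Cardinal.lift.{1} lam := by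
      rw [hP, Cardinal.mk_prod]
      simp only [Cardinal.lift_id]
      calc #↥R * #↥(Iio κ.ord : Set Ordinal) ≤ Cardinal.lift.{1} lam * Cardinal.lift.{1} lam :=
            mul_le_mul' hRle (by rw [mk_Iio_ord' κ]; exact hkll)
        _ = Cardinal.lift.{1} lam := Cardinal.mul_eq_self (by simpa using hlaminf)
    have hembA : Nonempty (P ↪ A) := by
      apply Cardinal.lift_mk_le'.1
      rw [hA]
      simpa using hPcard
    have hembB : Nonempty (P ↪ B) := by
      apply Cardinal.lift_mk_le'.1
      rw [hB]
      simpa using hPcard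
    obtain ⟨eA⟩ := hembA
    obtain ⟨eB⟩ := hembB
    set tail : P → Set Ordinal := fun p => (p.1 : Set Ordinal) \ Iio (p.2 : Ordinal) with htail
    have htailmem : ∀ p, tail p ∈ kappaSets κ :=
      fun p => tail_mem_kappaSets hreg (hR.1 p.1.2) p.2.2
    set LA : A → Set Ordinal := fun a =>
      if h : ∃ p : P, eA p = a then tail h.choose else Iio κ.ord with hLA
    set LB : B → Set Ordinal := fun b =>
      if h : ∃ p : P, eB p = b then tail h.choose else Iio κ.ord with hLB
    have hLAmem : ∀ a, LA a ∈ kappaSets κ := by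
      intro a; simp only [hLA]; split
      · next h => exact htailmem h.choose
      · exact Iio_mem_kappaSets κ
    have hLBmem : ∀ b, LB b ∈ kappaSets κ := by
      intro b; simp only [hLB]; split
      · next h => exact htailmem h.choose
      · exact Iio_mem_kappaSets κ
    have hLAcov : ∀ p : P, ∃ a, LA a = tail p := by
      intro p
      refine ⟨eA p, ?_⟩
      simp only [hLA]
      have h : ∃ p' : P, eA p' = eA p := ⟨p, rfl⟩
      rw [dif_pos h, eA.injective h.choose_spec]
    have hLBcov : ∀ p : P, ∃ b, LB b = tail p := by
      intro p
      refine ⟨eB p, ?_⟩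
      simp only [hLB]
      have h : ∃ p' : P, eB p' = eB p := ⟨p, rfl⟩
      rw [dif_pos h, eB.injective h.choose_spec]
    refine ⟨Sum.elim LA LB, by rintro (a | b); exacts [hLAmem a, hLBmem b], ?_⟩
    rintro ⟨c, hcmem, hcgood⟩
    set S : Set Ordinal := range (fun a => c (Sum.inl a)) with hSdef
    have hSsub : S ⊆ Iio κ.ord := by
      rintro x ⟨a, rfl⟩
      exact (hLAmem a).1 (hcmem (Sum.inl a))
    have hXS_unb : ∀ X, (hX : X ∈ R) → ∀ i, i < κ.ord → ∃ x ∈ X ∩ S, i ≤ x := by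
      intro X hX i hi
      obtain ⟨a, ha⟩ := hLAcov (⟨X, hX⟩, ⟨i, hi⟩)
      have hc := hcmem (Sum.inl a)
      rw [Sum.elim_inl, ha, htail] at hc
      exact ⟨c (Sum.inl a), ⟨hc.1, ⟨a, rfl⟩⟩, not_lt.1 hc.2⟩
    have hScard : S ∈ kappaSets κ := by
      refine ⟨hSsub, card_of_unbounded hreg hSsub ?_⟩
      intro i hi
      obtain ⟨x, hx, hix⟩ := hXS_unb X₀ hX₀ i hi
      exact ⟨x, hx.2, hix⟩
    obtain ⟨X, hXR, hnsp⟩ := hR.2 S hScard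
    have hfirst : #(X ∩ S : Set Ordinal) = Cardinal.lift.{1} κ :=
      card_of_unbounded hreg (fun x hx => (hR.1 hXR).1 hx.1) (hXS_unb X hXR)
    have hsecond : #(X \ S : Set Ordinal) ≠ Cardinal.lift.{1} κ := by
      intro h2
      exact hnsp ⟨hfirst, h2⟩
    obtain ⟨i, hi, hbd⟩ := bounded_of_not_card hreg (fun x hx => (hR.1 hXR).1 hx.1) hsecond
    obtain ⟨b, hb⟩ := hLBcov (⟨X, hXR⟩, ⟨i, hi⟩)
    have hcb := hcmem (Sum.inr b)
    rw [Sum.elim_inr, hb, htail] at hcb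
    have hcbS : c (Sum.inr b) ∈ S := by
      by_contra hcon
      exact hcb.2 (hbd _ ⟨hcb.1, hcon⟩)
    obtain ⟨a, ha⟩ := hcbS
    have hadj : (completeBipartiteGraph A B).Adj (Sum.inl a) (Sum.inr b) := by simp
    exact hcgood (Sum.inl a) (Sum.inr b) hadj ha
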